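/- Let r ≥ 2, let a = (a_1,…,a_r) be a sequence of positive integers, let d ≥ 2 be an integer, and let D(d) be the least common multiple of d·a_1,…,d·a_r. Then for every n ≥ 0, as an equality of rational numbers, p_{a,d}(n) = (1/(r−1)!) · ∑_{ε ∈ {0,1}^r} ∑ ∏_{ℓ=1}^{r−1} ((n − ∑_{i=1}^r a_i(d·j_i + ε_i))/D(d) + ℓ), where the inner sum runs over all tuples (j_1,…,j_r) of integers with 0 ≤ j_i ≤ D(d)/(d·a_i) − 1 for each 1 ≤ i ≤ r and ∑_{i=1}^r a_i(d·j_i + ε_i) ≡ n (mod D(d)). -/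

import Mathlib

open Finset in
private lemma aux_prod_ascFactorial (M t : ℕ) :
    ∏ ℓ ∈ Finset.Icc 1 t, (M + ℓ) = (M + 1).ascFactorial t := by
  induction t with
  | zero => simp
  | succ t ih =>
    rw [Finset.prod_Icc_succ_top (Nat.le_add_left 1 t), ih, Nat.ascFactorial_succ]
    ring

private lemma aux_count (r M B : ℕ) (hr : 1 ≤ r) (hB : M < B) :
    ((Fintype.piFinset fun _ : Fin r => Finset.range B).filter
      (fun k => ∑ i, k i = M)).card = (M + r - 1).choose (r - 1) := by
  have h3 : r + M - 1 = M + r - 1 := by omega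
  have h4 : M ≤ M + r - 1 := by omega
  have h5 : M + r - 1 - M = r - 1 := by omega
  have hset : (((Fintype.piFinset fun _ : Fin r => Finset.range B).filter
      (fun k => ∑ i, k i = M) : Finset (Fin r → ℕ)) : Set (Fin r → ℕ))
        = {k : Fin r → ℕ | ∑ i, k i = M} := by
    ext k
    simp only [Finset.coe_filter, Set.mem_setOf_eq, Fintype.mem_piFinset, Finset.mem_range]
    constructor
    · rintro ⟨-, h⟩; exact h
    · intro h
      refine ⟨fun i => ?_, h⟩
      calc k i ≤ ∑ i, k i := Finset.single_le_sum (fun i _ => Nat.zero_le _) (Finset.mem_univ i)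
        _ = M := h
        _ < B := hB
  have h2 : ((Fintype.piFinset fun _ : Fin r => Finset.range B).filter
      (fun k => ∑ i, k i = M)).card = Nat.card {k : Fin r → ℕ | ∑ i, k i = M} := by
    rw [Nat.card_coe_set_eq, ← hset, Set.ncard_coe_finset]
  rw [h2]
  have hcard : Nat.card {k : Fin r → ℕ | ∑ i, k i = M} = Fintype.card (Sym (Fin r) M) := by
    rw [← Nat.card_eq_fintype_card]
    exact Nat.card_congr (Sym.equivNatSumOfFintype (Fin r) M).symm
  rw [hcard, Sym.card_sym_eq_choose, Fintype.card_fin, h3, ← Nat.choose_symm h4, h5]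

set_option maxHeartbeats 1000000 in
theorem stmt_4 (r : ℕ) (hr : 2 ≤ r) (a : Fin r → ℕ) (ha : ∀ i, 0 < a i)
    (d : ℕ) (hd : 2 ≤ d) (D : ℕ)
    (hD : D = Finset.univ.lcm (fun i : Fin r => d * a i)) (n : ℕ) :
    (Set.ncard {x : Fin r → ℕ |
        (∑ i, a i * x i = n) ∧ ∀ i, x i % d = 0 ∨ x i % d = 1} : ℚ) =
      (1 / (Nat.factorial (r - 1) : ℚ)) *
        ∑ ε ∈ Fintype.piFinset (fun _ : Fin r => ({0, 1} : Finset ℕ)),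
          ∑ j ∈ (Fintype.piFinset fun i : Fin r => Finset.range (D / (d * a i))).filter
              (fun j => (∑ i, a i * (d * j i + ε i)) % D = n % D),
            ∏ ℓ ∈ Finset.Icc 1 (r - 1),
              (((n : ℚ) - ∑ i, (a i : ℚ) * ((d : ℚ) * j i + ε i)) / (D : ℚ) + (ℓ : ℚ)) := by
  classical
  have hr1 : 1 ≤ r := by omega
  have hd0 : 0 < d := by omega
  have hdvd : ∀ i, d * a i ∣ D := by
    intro i; rw [hD]; exact Finset.dvd_lcm (Finset.mem_univ i)
  have hD0 : 0 < D := by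
    rcases Nat.eq_zero_or_pos D with h0 | h; swap; · exact h
    exfalso
    rw [hD] at h0
    rw [Finset.lcm_eq_zero_iff] at h0
    obtain ⟨i, -, hi⟩ := h0
    have := ha i
    have := hd0
    have h2 : 0 < d * a i := Nat.mul_pos hd0 (ha i)
    omega
  have hq : ∀ i, d * a i * (D / (d * a i)) = D := fun i => Nat.mul_div_cancel' (hdvd i)
  have hqpos : ∀ i, 0 < D / (d * a i) :=
    fun i => Nat.div_pos (Nat.le_of_dvd hD0 (hdvd i)) (Nat.mul_pos hd0 (ha i))
  -- abbreviations
  set E := Fintype.piFinset (fun _ : Fin r => ({0, 1} : Finset ℕ)) with hE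
  set J := Fintype.piFinset (fun i : Fin r => Finset.range (D / (d * a i))) with hJ
  set P := Fintype.piFinset (fun _ : Fin r => Finset.range (n + 1)) with hP
  set K : (Fin r → ℕ) → (Fin r → ℕ) → Finset (Fin r → ℕ) := fun ε j =>
    P.filter (fun k => (∑ i, a i * (d * j i + ε i)) + D * ∑ i, k i = n) with hK
  set T := P.filter (fun x => (∑ i, a i * x i = n) ∧ ∀ i, x i % d = 0 ∨ x i % d = 1) with hT
  set F : (Fin r → ℕ) → (Fin r → ℕ) → (Fin r → ℕ) → (Fin r → ℕ) := fun ε j k i =>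
    d * (j i + (D / (d * a i)) * k i) + ε i with hF
  -- algebraic identity
  have hsum : ∀ (ε j k : Fin r → ℕ), ∑ i, a i * F ε j k i
      = (∑ i, a i * (d * j i + ε i)) + D * ∑ i, k i := by
    intro ε j k
    rw [Finset.mul_sum, ← Finset.sum_add_distrib]
    refine Finset.sum_congr rfl fun i _ => ?_
    have h1 : a i * F ε j k i = a i * (d * j i + ε i) + (d * a i * (D / (d * a i))) * k i := by
      simp only [hF]; ring
    rw [h1, hq i]
  -- membership facts
  have hEmem : ∀ ε ∈ E, ∀ i, ε i ≤ 1 := by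
    intro ε hε i
    rw [hE, Fintype.mem_piFinset] at hε
    have := hε i
    simp only [Finset.mem_insert, Finset.mem_singleton] at this
    omega
  have hJmem : ∀ j ∈ J, ∀ i, j i < D / (d * a i) := by
    intro j hj i
    rw [hJ, Fintype.mem_piFinset] at hj
    have := hj i
    simpa using this
  -- recovery of ε and j from F ε j k
  have hrec : ∀ ε ∈ E, ∀ j ∈ J, ∀ (k : Fin r → ℕ) (i : Fin r),
      F ε j k i % d = ε i ∧ (F ε j k i / d) % (D / (d * a i)) = j i := by
    intro ε hε j hj k i
    have h1 : ε i < d := lt_of_le_of_lt (hEmem ε hε i) (by omega)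
    constructor
    · rw [hF]
      simp only
      rw [Nat.mul_add_mod, Nat.mod_eq_of_lt h1]
    · rw [hF]
      simp only
      rw [Nat.mul_add_div hd0, Nat.div_eq_of_lt h1, Nat.add_zero,
        Nat.add_mul_mod_self_left, Nat.mod_eq_of_lt (hJmem j hj i)]
  -- decomposition of T
  have hbnd : ∀ x : Fin r → ℕ, (∑ i, a i * x i = n) → ∀ i, x i < n + 1 := by
    intro x hx i
    have hle : a i * x i ≤ n := by
      rw [← hx]
      exact Finset.single_le_sum (f := fun i => a i * x i) (fun i _ => Nat.zero_le _) (Finset.mem_univ i)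
    have h2 : x i ≤ a i * x i := Nat.le_mul_of_pos_left (x i) (ha i)
    omega
  have hTeq : T = (E ×ˢ J).biUnion (fun p => (K p.1 p.2).image (F p.1 p.2)) := by
    ext x
    rw [hT, Finset.mem_filter, Finset.mem_biUnion]
    constructor
    · rintro ⟨hxP, hx1, hx2⟩
      set ε : Fin r → ℕ := fun i => x i % d with hεdef
      set j : Fin r → ℕ := fun i => (x i / d) % (D / (d * a i)) with hjdef
      set k : Fin r → ℕ := fun i => (x i / d) / (D / (d * a i)) with hkdef
      have hεE : ε ∈ E := by
        rw [hE, Fintype.mem_piFinset]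
        intro i
        simp only [hεdef, Finset.mem_insert, Finset.mem_singleton]
        exact hx2 i
      have hjJ : j ∈ J := by
        rw [hJ, Fintype.mem_piFinset]
        intro i
        exact Finset.mem_range.mpr (Nat.mod_lt _ (hqpos i))
      have hxF : x = F ε j k := by
        funext i
        simp only [hF, hεdef, hjdef, hkdef]
        rw [Nat.mod_add_div (x i / d) (D / (d * a i)), Nat.div_add_mod (x i) d]
      have hkK : k ∈ K ε j := by
        rw [hK]
        simp only
        rw [Finset.mem_filter, hP, Fintype.mem_piFinset]
        constructor
        · intro i
          rw [Finset.mem_range]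
          have h1 : x i / d ≤ x i := Nat.div_le_self (x i) d
          have h2 : k i ≤ x i / d := Nat.div_le_self _ _
          have h3 := hbnd x hx1 i
          omega
        · rw [← hsum ε j k, ← hxF]
          exact hx1
      exact ⟨(ε, j), Finset.mem_product.mpr ⟨hεE, hjJ⟩,
        Finset.mem_image.mpr ⟨k, hkK, hxF.symm⟩⟩
    · rintro ⟨p, hp, hx⟩
      obtain ⟨hεE, hjJ⟩ := Finset.mem_product.mp hp
      obtain ⟨k, hkK, hxF⟩ := Finset.mem_image.mp hx
      rw [hK, Finset.mem_filter] at hkK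
      obtain ⟨hkP, hkcon⟩ := hkK
      have hx1 : ∑ i, a i * x i = n := by
        rw [← hxF, hsum p.1 p.2 k]
        exact hkcon
      refine ⟨?_, hx1, ?_⟩
      · rw [hP, Fintype.mem_piFinset]
        intro i
        exact Finset.mem_range.mpr (hbnd x hx1 i)
      · intro i
        have h1 := (hrec p.1 hεE p.2 hjJ k i).1
        rw [hxF] at h1
        have h2 := hEmem p.1 hεE i
        omega
  have hdisj : ∀ p ∈ E ×ˢ J, ∀ p' ∈ E ×ˢ J, p ≠ p' →
      Disjoint ((K p.1 p.2).image (F p.1 p.2)) ((K p'.1 p'.2).image (F p'.1 p'.2)) := by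
    intro p hp p' hp' hne
    rw [Finset.disjoint_left]
    intro x hx hx'
    obtain ⟨hE1, hJ1⟩ := Finset.mem_product.mp hp
    obtain ⟨hE2, hJ2⟩ := Finset.mem_product.mp hp'
    obtain ⟨k, hk, hxk⟩ := Finset.mem_image.mp hx
    obtain ⟨k', hk', hxk'⟩ := Finset.mem_image.mp hx'
    apply hne
    have hcomp : ∀ i, p.1 i = p'.1 i ∧ p.2 i = p'.2 i := by
      intro i
      have h1 := hrec p.1 hE1 p.2 hJ1 k i
      have h2 := hrec p'.1 hE2 p'.2 hJ2 k' i
      rw [hxk] at h1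
      rw [hxk'] at h2
      exact ⟨h1.1.symm.trans h2.1, h1.2.symm.trans h2.2⟩
    exact Prod.ext (funext fun i => (hcomp i).1) (funext fun i => (hcomp i).2)
  have hFinj : ∀ ε j, Function.Injective (F ε j) := by
    intro ε j k k' h
    funext i
    have h1 := congrFun h i
    simp only [hF] at h1
    have h2 := Nat.add_right_cancel h1
    have h3 := Nat.eq_of_mul_eq_mul_left hd0 h2
    have h4 := Nat.add_left_cancel h3
    exact Nat.eq_of_mul_eq_mul_left (hqpos i) h4
  have hcardT : T.card = ∑ ε ∈ E, ∑ j ∈ J, (K ε j).card := by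
    rw [hTeq, Finset.card_biUnion hdisj, Finset.sum_product]
    exact Finset.sum_congr rfl fun ε _ => Finset.sum_congr rfl fun j _ =>
      Finset.card_image_of_injective _ (hFinj ε j)
  -- empty K off the congruence condition
  have hKempty : ∀ ε j, (∑ i, a i * (d * j i + ε i)) % D ≠ n % D → K ε j = ∅ := by
    intro ε j hne
    rw [hK, Finset.filter_eq_empty_iff]
    intro k _
    intro hcon
    apply hne
    rw [← hcon, Nat.add_mul_mod_self_left]
  -- the key per-term identity
  have hkey : ∀ ε ∈ E, ∀ j ∈ J, (∑ i, a i * (d * j i + ε i)) % D = n % D →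
      (∏ ℓ ∈ Finset.Icc 1 (r - 1),
        (((n : ℚ) - ∑ i, (a i : ℚ) * ((d : ℚ) * j i + ε i)) / (D : ℚ) + (ℓ : ℚ)))
      = (Nat.factorial (r - 1) : ℚ) * ((K ε j).card : ℚ) := by
    intro ε hε j hj hc
    have hDQ : (D : ℚ) ≠ 0 := Nat.cast_ne_zero.mpr (by omega)
    have hcast : (∑ i, (a i : ℚ) * ((d : ℚ) * j i + ε i))
        = ((∑ i, a i * (d * j i + ε i) : ℕ) : ℚ) := by
      push_cast
      ring
    by_cases h1 : (∑ i, a i * (d * j i + ε i)) ≤ n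
    · -- the exact case
      have hdvd2 : D ∣ n - ∑ i, a i * (d * j i + ε i) := (Nat.modEq_iff_dvd' h1).mp hc
      obtain ⟨M, hM⟩ := hdvd2
      have hn' : n = (∑ i, a i * (d * j i + ε i)) + D * M := by omega
      have hMle : M ≤ n := by
        have h2 : M ≤ D * M := Nat.le_mul_of_pos_left M hD0
        omega
      have hKeq : K ε j = P.filter (fun k => ∑ i, k i = M) := by
        rw [hK]
        simp only
        apply Finset.filter_congr
        intro k _
        constructor
        · intro h
          have h3 : D * (∑ i, k i) = D * M := by omega
          exact Nat.eq_of_mul_eq_mul_left hD0 h3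
        · intro h
          rw [h]
          omega
      have hm : ((n : ℚ) - ∑ i, (a i : ℚ) * ((d : ℚ) * j i + ε i)) / (D : ℚ) = (M : ℚ) := by
        rw [hcast, hn']
        push_cast
        field_simp
        ring
      rw [hm, hKeq, hP, aux_count r M (n + 1) hr1 (by omega)]
      have hprod : (∏ ℓ ∈ Finset.Icc 1 (r - 1), ((M : ℚ) + (ℓ : ℚ)))
          = ((∏ ℓ ∈ Finset.Icc 1 (r - 1), (M + ℓ) : ℕ) : ℚ) := by
        push_cast
        rfl
      rw [hprod, aux_prod_ascFactorial, Nat.ascFactorial_eq_factorial_mul_choose,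
        show M + (r - 1) = M + r - 1 by omega]
      push_cast
      ring
    · -- the vanishing case
      push_neg at h1
      have hKe : K ε j = ∅ := by
        rw [hK]
        simp only
        rw [Finset.filter_eq_empty_iff]
        intro k _
        omega
      rw [hKe, Finset.card_empty, Nat.cast_zero, mul_zero]
      have hdvd2 : D ∣ (∑ i, a i * (d * j i + ε i)) - n :=
        (Nat.modEq_iff_dvd' (le_of_lt h1)).mp hc.symm
      obtain ⟨t, ht⟩ := hdvd2
      have hSv : ∑ i, a i * (d * j i + ε i) = n + D * t := by omega
      have ht1 : 1 ≤ t := by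
        rcases Nat.eq_zero_or_pos t with h | h
        · rw [h, Nat.mul_zero] at ht
          omega
        · exact h
      have hterm : ∀ i, a i * (d * j i + ε i) < D := by
        intro i
        have hji : j i + 1 ≤ D / (d * a i) := hJmem j hj i
        have hεi : ε i ≤ 1 := hEmem ε hε i
        have hqi := hq i
        have hai := ha i
        have h7 : a i < d * a i := by
          calc a i = 1 * a i := (Nat.one_mul _).symm
            _ < d * a i := (Nat.mul_lt_mul_right hai).mpr (by omega)
        calc a i * (d * j i + ε i) ≤ a i * (d * j i + 1) :=
              Nat.mul_le_mul_left _ (by omega)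
          _ = a i * d * j i + a i := by ring
          _ < a i * d * j i + d * a i := by omega
          _ = d * a i * (j i + 1) := by ring
          _ ≤ d * a i * (D / (d * a i)) := Nat.mul_le_mul_left _ hji
          _ = D := hqi
      have hne : (Finset.univ : Finset (Fin r)).Nonempty :=
        ⟨⟨0, by omega⟩, Finset.mem_univ _⟩
      have hSlt : (∑ i, a i * (d * j i + ε i)) < r * D := by
        calc ∑ i, a i * (d * j i + ε i) < ∑ _i : Fin r, D :=
              Finset.sum_lt_sum_of_nonempty hne (fun i _ => hterm i)
          _ = r * D := by
              rw [Finset.sum_const, Finset.card_univ, Fintype.card_fin, smul_eq_mul]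
      have htr : t ≤ r - 1 := by
        have h5 : D * t < D * r := by
          rw [Nat.mul_comm r D] at hSlt
          omega
        have h6 : t < r := Nat.lt_of_mul_lt_mul_left h5
        omega
      apply Finset.prod_eq_zero (Finset.mem_Icc.mpr ⟨ht1, htr⟩)
      rw [hcast, hSv]
      push_cast
      field_simp
      ring
  -- set identification
  have hset : {x : Fin r → ℕ |
      (∑ i, a i * x i = n) ∧ ∀ i, x i % d = 0 ∨ x i % d = 1} = (T : Set (Fin r → ℕ)) := by
    ext x
    simp only [Set.mem_setOf_eq, hT, Finset.coe_filter, hP, Fintype.mem_piFinset,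
      Finset.mem_range]
    constructor
    · rintro ⟨h1, h2⟩
      exact ⟨fun i => hbnd x h1 i, h1, h2⟩
    · rintro ⟨-, h1, h2⟩
      exact ⟨h1, h2⟩
  -- assemble
  rw [hset, Set.ncard_coe_finset]
  have hstep : ∀ ε ∈ E,
      (∑ j ∈ J.filter (fun j => (∑ i, a i * (d * j i + ε i)) % D = n % D),
        ∏ ℓ ∈ Finset.Icc 1 (r - 1),
          (((n : ℚ) - ∑ i, (a i : ℚ) * ((d : ℚ) * j i + ε i)) / (D : ℚ) + (ℓ : ℚ)))
      = (Nat.factorial (r - 1) : ℚ) * ∑ j ∈ J, ((K ε j).card : ℚ) := by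
    intro ε hε
    rw [Finset.sum_filter]
    rw [Finset.mul_sum]
    refine Finset.sum_congr rfl fun j hj => ?_
    by_cases hc : (∑ i, a i * (d * j i + ε i)) % D = n % D
    · rw [if_pos hc, hkey ε hε j hj hc]
    · rw [if_neg hc, hKempty ε j hc]
      simp
  rw [Finset.sum_congr rfl hstep, ← Finset.mul_sum]
  have hfac : (Nat.factorial (r - 1) : ℚ) ≠ 0 := Nat.cast_ne_zero.mpr (Nat.factorial_ne_zero _)
  rw [hcardT]
  push_cast
  rw [← mul_assoc, one_div, inv_mul_cancel₀ hfac, one_mul]
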